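/- Let H be a separable Hilbert space, B a positive self-adjoint operator with B ≥ Id, and (ρ_m) a sequence of nonnegative trace-class operators such that ρ_m → ρ weak-* in trace class and B^{1/2} ρ_m B^{1/2} → σ weak-* in trace class for some trace-class σ. Then σ = B^{1/2} ρ B^{1/2} (in particular B^{1/2} ρ B^{1/2} is trace class). -/

import Mathlib

open Filter Topology
open scoped InnerProductSpace ENNReal

/-- The trace norm of a bounded operator, characterized as the supremum over pairs of
finite orthonormal families `(e_i)`, `(f_i)` of `∑ |⟨e_i, T f_i⟩|`. -/
noncomputable def traceNorm {H : Type*} [NormedAddCommGroup H]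
    [InnerProductSpace ℂ H] (T : H →L[ℂ] H) : ℝ≥0∞ :=
  ⨆ (n : ℕ) (e : Fin n → H) (f : Fin n → H) (_ : Orthonormal ℂ e)
    (_ : Orthonormal ℂ f), ∑ i, (‖⟪e i, T (f i)⟫_ℂ‖₊ : ℝ≥0∞)

lemma rankOne_compact {H : Type*} [NormedAddCommGroup H] [InnerProductSpace ℂ H]
    (u v : H) : IsCompactOperator ((innerSL ℂ u).smulRight v) := by
  refine ⟨(fun c : ℂ => c • v) '' Metric.closedBall 0 ‖u‖, ?_, ?_⟩
  · exact (isCompact_closedBall 0 ‖u‖).image (by continuity)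
  · filter_upwards [Metric.ball_mem_nhds (0 : H) one_pos] with x hx
    refine ⟨⟪u, x⟫_ℂ, ?_, rfl⟩
    simp only [Metric.mem_closedBall, dist_zero_right]
    calc ‖⟪u, x⟫_ℂ‖ ≤ ‖u‖ * ‖x‖ := norm_inner_le_norm u x
    _ ≤ ‖u‖ * 1 := by
        have : ‖x‖ ≤ 1 := le_of_lt (by simpa using hx)
        exact mul_le_mul_of_nonneg_left this (norm_nonneg u)
    _ = ‖u‖ := mul_one _

lemma trace_rankOne {H : Type*} [NormedAddCommGroup H] [InnerProductSpace ℂ H]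
    [CompleteSpace H] (b : HilbertBasis ℕ ℂ H) (T : H →L[ℂ] H) (i j : ℕ) :
    ∑' k, ⟪b k, (T ∘L (innerSL ℂ (b i)).smulRight (b j)) (b k)⟫_ℂ = ⟪b i, T (b j)⟫_ℂ := by
  have horth := b.orthonormal
  rw [orthonormal_iff_ite] at horth
  have h : ∀ k, ⟪b k, (T ∘L (innerSL ℂ (b i)).smulRight (b j)) (b k)⟫_ℂ
      = ⟪b i, b k⟫_ℂ * ⟪b k, T (b j)⟫_ℂ := by
    intro k
    simp [ContinuousLinearMap.smulRight_apply, map_smul, inner_smul_right]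
  rw [tsum_eq_single i]
  · rw [h i, horth i i]; simp
  · intro k hk
    rw [h k, horth i k, if_neg (Ne.symm hk), zero_mul]

/-- Identification step of Lemma 4.3.  The positive self-adjoint operator `B ≥ Id` is
described by its eigenbasis `b` and eigenvalues `μ_j ≥ 1`; `B^{1/2} T B^{1/2}` tested
against a compact operator `K` has trace
`∑_{i,j} √μ_i √μ_j ⟨b_i, T b_j⟩ ⟨b_j, K b_i⟩`.  If nonnegative trace-class `ρ_m → ρ`
weak-* in trace class and `B^{1/2} ρ_m B^{1/2} → σ` weak-* in trace class, then
`σ = B^{1/2} ρ B^{1/2}`, i.e. `⟨b_i, σ b_j⟩ = √μ_i √μ_j ⟨b_i, ρ b_j⟩` for all `i, j`. -/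
theorem stmt19 {H : Type*} [NormedAddCommGroup H] [InnerProductSpace ℂ H]
    [CompleteSpace H] (b : HilbertBasis ℕ ℂ H) (μ : ℕ → ℝ) (hμ : ∀ j, 1 ≤ μ j)
    (ρm : ℕ → H →L[ℂ] H) (ρ σ : H →L[ℂ] H)
    (hpos : ∀ m, (ρm m).IsPositive) (htc : ∀ m, traceNorm (ρm m) < ⊤)
    (htcρ : traceNorm ρ < ⊤) (htcσ : traceNorm σ < ⊤)
    (hweak : ∀ K : H →L[ℂ] H, IsCompactOperator K →
      Tendsto (fun m => ∑' i, ⟪b i, ((ρm m) ∘L K) (b i)⟫_ℂ) atTop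
        (𝓝 (∑' i, ⟪b i, (ρ ∘L K) (b i)⟫_ℂ)))
    (hweakB : ∀ K : H →L[ℂ] H, IsCompactOperator K →
      Tendsto (fun m => ∑' (p : ℕ × ℕ),
          ((Real.sqrt (μ p.1) * Real.sqrt (μ p.2) : ℝ) : ℂ) *
            ⟪b p.1, (ρm m) (b p.2)⟫_ℂ * ⟪b p.2, K (b p.1)⟫_ℂ) atTop
        (𝓝 (∑' i, ⟪b i, (σ ∘L K) (b i)⟫_ℂ))) :
    ∀ i j : ℕ, ⟪b i, σ (b j)⟫_ℂ =
      ((Real.sqrt (μ i) * Real.sqrt (μ j) : ℝ) : ℂ) * ⟪b i, ρ (b j)⟫_ℂ := by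
  intro i j
  set K : H →L[ℂ] H := (innerSL ℂ (b i)).smulRight (b j) with hK
  have hKc : IsCompactOperator K := rankOne_compact (b i) (b j)
  have horth := b.orthonormal
  rw [orthonormal_iff_ite] at horth
  set c : ℂ := ((Real.sqrt (μ i) * Real.sqrt (μ j) : ℝ) : ℂ) with hc
  -- the double sum collapses
  have hdouble : ∀ T : H →L[ℂ] H,
      (∑' (p : ℕ × ℕ), ((Real.sqrt (μ p.1) * Real.sqrt (μ p.2) : ℝ) : ℂ) *
        ⟪b p.1, T (b p.2)⟫_ℂ * ⟪b p.2, K (b p.1)⟫_ℂ) = c * ⟪b i, T (b j)⟫_ℂ := by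
    intro T
    have h : ∀ p : ℕ × ℕ, ⟪b p.2, K (b p.1)⟫_ℂ = ⟪b i, b p.1⟫_ℂ * ⟪b p.2, b j⟫_ℂ := by
      intro p
      simp [hK, ContinuousLinearMap.smulRight_apply, inner_smul_right]
    rw [tsum_eq_single (i, j)]
    · rw [h (i, j), horth i i, horth j j]; simp [hc]
    · intro p hp
      rw [h p, horth i p.1, horth p.2 j]
      rcases eq_or_ne i p.1 with h1 | h1
      · rcases eq_or_ne p.2 j with h2 | h2
        · exact absurd (Prod.ext h1.symm h2) hp
        · rw [if_neg h2, mul_zero, mul_zero]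
      · rw [if_neg h1, zero_mul, mul_zero]
  have h1 := hweak K hKc
  have h2 := hweakB K hKc
  rw [hK] at h1
  simp only [trace_rankOne b _ i j] at h1
  simp only [hdouble] at h2
  rw [hK] at h2
  simp only [trace_rankOne b _ i j] at h2
  have h3 : Tendsto (fun m => c * ⟪b i, (ρm m) (b j)⟫_ℂ) atTop
      (𝓝 (c * ⟪b i, ρ (b j)⟫_ℂ)) := h1.const_mul c
  exact tendsto_nhds_unique h2 h3
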